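/- (Suzuki's correlation identity.) Let n ≥ 3, let K be real, and let j₁, …, j_m (m ≥ 1) be m distinct sites of the torus (ZMod n)³. Then ⟨∏_{i=1}^m σ(j_i)⟩_n = (1/m)·∑_{k=1}^m ⟨(∏_{i=1, i≠k}^m σ(j_i)) · tanh(K·∑_{α=1}^{3}(σ(j_k+e_α) + σ(j_k−e_α)))⟩_n, where the inner sum runs over the six nearest neighbors of j_k. Moreover the identity already holds without the average over k, i.e. for each fixed k ∈ {1,…,m}. -/

import Mathlib

open scoped BigOperators

/-- The sites of the periodic `n × n × n` cubic lattice: the discrete 3-torus. -/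
abbrev Site (n : ℕ) : Type := ZMod n × ZMod n × ZMod n

/-- A spin configuration: a function assigning to each site a spin in `{-1, 1} ⊆ ℤ`. -/
abbrev SpinCfg (n : ℕ) : Type := Site n → ({-1, 1} : Finset ℤ)

/-- The bond sum `S(σ) = ∑_i ∑_{α=1}^3 σ(i)·σ(i+e_α)`, each of the `3n³`
nearest-neighbor bonds of the torus counted once. -/
def bondSum : (n : ℕ) → SpinCfg n → ℤ
  | 0, _ => 0
  | n + 1, σ =>
      ∑ i : Site (n + 1),
        ((σ i : ℤ) * (σ (i + (1, 0, 0)) : ℤ) + (σ i : ℤ) * (σ (i + (0, 1, 0)) : ℤ) +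
          (σ i : ℤ) * (σ (i + (0, 0, 1)) : ℤ))

/-- The zero-field partition function `Z_n(K) = ∑_σ exp (K * S σ)`, for complex `K`. -/
noncomputable def Zc : (n : ℕ) → ℂ → ℂ
  | 0, _ => 0
  | n + 1, K => ∑ σ : SpinCfg (n + 1), Complex.exp (K * (bondSum (n + 1) σ : ℂ))

/-- The zero-field partition function for real `K`. -/
noncomputable def Zr : (n : ℕ) → ℝ → ℝ
  | 0, _ => 0
  | n + 1, K => ∑ σ : SpinCfg (n + 1), Real.exp (K * (bondSum (n + 1) σ : ℝ))

/-- The free energy per site `g_n(K) = n⁻³ log Z_n(K)` for real `K`. -/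
noncomputable def g : (n : ℕ) → ℝ → ℝ
  | 0, _ => 0
  | n + 1, K => Real.log (Zr (n + 1) K) / ((n : ℝ) + 1) ^ 3

/-- Thermal expectation `⟨A⟩_n = Z_n(K)⁻¹ ∑_σ A σ * exp (K * S σ)`, real version. -/
noncomputable def expec : (n : ℕ) → ℝ → ((SpinCfg n) → ℝ) → ℝ
  | 0, _, _ => 0
  | n + 1, K, A =>
      (∑ σ : SpinCfg (n + 1), A σ * Real.exp (K * (bondSum (n + 1) σ : ℝ))) / Zr (n + 1) K

/-- Numerator `∑_σ (∏_{i ∈ T} σ i) exp (K * S σ)` of the correlation of the set `T` of sites. -/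
noncomputable def corrNum : (n : ℕ) → Finset (Site n) → ℂ → ℂ
  | 0, _, _ => 0
  | n + 1, T, K =>
      ∑ σ : SpinCfg (n + 1), (∏ i ∈ T, ((σ i : ℤ) : ℂ)) * Complex.exp (K * (bondSum (n + 1) σ : ℂ))

/-- The correlation function `C_{n,T}(K)` of a finite set `T` of sites. -/
noncomputable def corr (n : ℕ) (T : Finset (Site n)) (K : ℂ) : ℂ := corrNum n T K / Zc n K
/-- Sum of the six nearest-neighbor spins of the site `x`. -/
def nbrSum {n : ℕ} (σ : SpinCfg n) (x : Site n) : ℤ :=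
  (σ (x + (1, 0, 0)) : ℤ) + (σ (x - (1, 0, 0)) : ℤ) +
  (σ (x + (0, 1, 0)) : ℤ) + (σ (x - (0, 1, 0)) : ℤ) +
  (σ (x + (0, 0, 1)) : ℤ) + (σ (x - (0, 0, 1)) : ℤ)

def negSpin (s : ({-1, 1} : Finset ℤ)) : ({-1, 1} : Finset ℤ) :=
  ⟨-(s : ℤ), by
    have := s.2
    simp only [Finset.mem_insert, Finset.mem_singleton] at this ⊢
    omega⟩

@[simp] lemma negSpin_coe (s : ({-1, 1} : Finset ℤ)) : ((negSpin s : ({-1,1}:Finset ℤ)) : ℤ) = -(s : ℤ) := rfl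

lemma negSpin_negSpin (s : ({-1, 1} : Finset ℤ)) : negSpin (negSpin s) = s := Subtype.ext (by simp)

def flipAt {n : ℕ} (x : Site n) (σ : SpinCfg n) : SpinCfg n :=
  fun i => if i = x then negSpin (σ i) else σ i

lemma flipAt_invol {n : ℕ} (x : Site n) : Function.Involutive (flipAt x) := by
  intro σ; funext i; by_cases h : i = x <;> simp [flipAt, h, negSpin_negSpin]

lemma flipAt_self {n : ℕ} (x : Site n) (σ : SpinCfg n) :
    ((flipAt x σ x : ℤ)) = -(σ x : ℤ) := by simp [flipAt]

lemma flipAt_ne {n : ℕ} (x : Site n) (σ : SpinCfg n) {y : Site n} (h : y ≠ x) :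
    flipAt x σ y = σ y := by simp [flipAt, h]

lemma spin_cases {n : ℕ} (σ : SpinCfg n) (x : Site n) :
    ((σ x : ℤ)) = -1 ∨ ((σ x : ℤ)) = 1 := by
  have := (σ x).2
  simpa only [Finset.mem_insert, Finset.mem_singleton] using this

section Geom
variable {n : ℕ}

lemma zmod_one_ne_zero (hn : 3 ≤ n) : (1 : ZMod n) ≠ 0 := by
  haveI : Fact (1 < n) := ⟨by omega⟩
  exact one_ne_zero

lemma shift_ne (x : Site n) {a b : Site n} (h : a ≠ b) : x + a ≠ x + b :=
  fun H => h (add_left_cancel H)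

lemma add_ne_self' {x e : Site n} (he : e ≠ 0) : x + e ≠ x := by
  intro H; exact he (by simpa using add_eq_left.mp H)

lemma sub_ne_self' {x e : Site n} (he : e ≠ 0) : x - e ≠ x := by
  intro H; exact he (by simpa using sub_eq_self.mp H)

lemma e1_ne_zero (hn : 3 ≤ n) : ((1,0,0) : Site n) ≠ 0 := by
  simp [Prod.ext_iff, zmod_one_ne_zero hn]
lemma e2_ne_zero (hn : 3 ≤ n) : ((0,1,0) : Site n) ≠ 0 := by
  simp [Prod.ext_iff, zmod_one_ne_zero hn]
lemma e3_ne_zero (hn : 3 ≤ n) : ((0,0,1) : Site n) ≠ 0 := by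
  simp [Prod.ext_iff, zmod_one_ne_zero hn]

lemma nbrSum_flipAt (hn : 3 ≤ n) (x : Site n) (σ : SpinCfg n) :
    nbrSum (flipAt x σ) x = nbrSum σ x := by
  unfold nbrSum
  rw [flipAt_ne x σ (add_ne_self' (e1_ne_zero hn)),
      flipAt_ne x σ (sub_ne_self' (e1_ne_zero hn)),
      flipAt_ne x σ (add_ne_self' (e2_ne_zero hn)),
      flipAt_ne x σ (sub_ne_self' (e2_ne_zero hn)),
      flipAt_ne x σ (add_ne_self' (e3_ne_zero hn)),
      flipAt_ne x σ (sub_ne_self' (e3_ne_zero hn))]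

end Geom

def bterm {n : ℕ} (σ : SpinCfg n) (i : Site n) : ℤ :=
  (σ i : ℤ) * (σ (i + (1,0,0)) : ℤ) + (σ i : ℤ) * (σ (i + (0,1,0)) : ℤ) +
    (σ i : ℤ) * (σ (i + (0,0,1)) : ℤ)

lemma bondSum_eq {N : ℕ} (σ : SpinCfg (N+1)) :
    bondSum (N+1) σ = ∑ i : Site (N+1), bterm σ i := rfl

lemma sub_add_ne {n : ℕ} (x : Site n) {a b : Site n} (h : b ≠ a) : x - a + b ≠ x := by
  intro H
  rw [sub_add_eq_add_sub, sub_eq_iff_eq_add] at H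
  exact h (add_left_cancel H)

lemma bondSum_flipAt {N : ℕ} (hn : 3 ≤ N + 1) (x : Site (N+1)) (σ : SpinCfg (N+1)) :
    bondSum (N+1) (flipAt x σ) = bondSum (N+1) σ - 2 * (σ x : ℤ) * nbrSum σ x := by
  classical
  have h1 : (1 : ZMod (N+1)) ≠ 0 := zmod_one_ne_zero hn
  have he1z : ((1,0,0) : Site (N+1)) ≠ 0 := e1_ne_zero hn
  have he2z : ((0,1,0) : Site (N+1)) ≠ 0 := e2_ne_zero hn
  have he3z : ((0,0,1) : Site (N+1)) ≠ 0 := e3_ne_zero hn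
  have h12 : ((1,0,0) : Site (N+1)) ≠ (0,1,0) := by simp [Prod.ext_iff, h1]
  have h13 : ((1,0,0) : Site (N+1)) ≠ (0,0,1) := by simp [Prod.ext_iff, h1]
  have h23 : ((0,1,0) : Site (N+1)) ≠ (0,0,1) := by simp [Prod.ext_iff, h1]
  have R : ∀ y : Site (N+1), y ≠ x → flipAt x σ y = σ y := fun y h => flipAt_ne x σ h
  have F0 : flipAt x σ x = negSpin (σ x) := by simp [flipAt]
  have Fp1 := R _ (add_ne_self' (x := x) he1z)
  have Fp2 := R _ (add_ne_self' (x := x) he2z)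
  have Fp3 := R _ (add_ne_self' (x := x) he3z)
  have Fm1 := R _ (sub_ne_self' (x := x) he1z)
  have Fm2 := R _ (sub_ne_self' (x := x) he2z)
  have Fm3 := R _ (sub_ne_self' (x := x) he3z)
  have G12 := R _ (sub_add_ne x (a := ((1,0,0) : Site (N+1))) (b := (0,1,0)) h12.symm)
  have G13 := R _ (sub_add_ne x (a := ((1,0,0) : Site (N+1))) (b := (0,0,1)) h13.symm)
  have G21 := R _ (sub_add_ne x (a := ((0,1,0) : Site (N+1))) (b := (1,0,0)) h12)
  have G23 := R _ (sub_add_ne x (a := ((0,1,0) : Site (N+1))) (b := (0,0,1)) h23.symm)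
  have G31 := R _ (sub_add_ne x (a := ((0,0,1) : Site (N+1))) (b := (1,0,0)) h13)
  have G32 := R _ (sub_add_ne x (a := ((0,0,1) : Site (N+1))) (b := (0,1,0)) h23)
  have Dx : bterm (flipAt x σ) x - bterm σ x
      = -2 * (σ x : ℤ) * ((σ (x+(1,0,0)) : ℤ) + (σ (x+(0,1,0)) : ℤ) + (σ (x+(0,0,1)) : ℤ)) := by
    simp only [bterm, F0, Fp1, Fp2, Fp3, negSpin_coe]; ring
  have D1 : bterm (flipAt x σ) (x-(1,0,0)) - bterm σ (x-(1,0,0))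
      = -2 * (σ (x-(1,0,0)) : ℤ) * (σ x : ℤ) := by
    simp only [bterm, sub_add_cancel, F0, Fm1, G12, G13, negSpin_coe]; ring
  have D2 : bterm (flipAt x σ) (x-(0,1,0)) - bterm σ (x-(0,1,0))
      = -2 * (σ (x-(0,1,0)) : ℤ) * (σ x : ℤ) := by
    simp only [bterm, sub_add_cancel, F0, Fm2, G21, G23, negSpin_coe]; ring
  have D3 : bterm (flipAt x σ) (x-(0,0,1)) - bterm σ (x-(0,0,1))
      = -2 * (σ (x-(0,0,1)) : ℤ) * (σ x : ℤ) := by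
    simp only [bterm, sub_add_cancel, F0, Fm3, G31, G32, negSpin_coe]; ring
  have hdiff : bondSum (N+1) (flipAt x σ) - bondSum (N+1) σ
      = ∑ i : Site (N+1), (bterm (flipAt x σ) i - bterm σ i) := by
    rw [bondSum_eq, bondSum_eq, Finset.sum_sub_distrib]
  set S : Finset (Site (N+1)) := {x, x-(1,0,0), x-(0,1,0), x-(0,0,1)} with hSdef
  have hvan : ∀ i ∈ Finset.univ, i ∉ S → (bterm (flipAt x σ) i - bterm σ i) = 0 := by
    intro i _ hi
    simp only [hSdef, Finset.mem_insert, Finset.mem_singleton] at hi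
    push_neg at hi
    obtain ⟨hix, hi1, hi2, hi3⟩ := hi
    have k1 : i + ((1,0,0) : Site (N+1)) ≠ x := by
      intro H; exact hi1 (by rw [← H]; abel)
    have k2 : i + ((0,1,0) : Site (N+1)) ≠ x := by
      intro H; exact hi2 (by rw [← H]; abel)
    have k3 : i + ((0,0,1) : Site (N+1)) ≠ x := by
      intro H; exact hi3 (by rw [← H]; abel)
    simp only [bterm, R _ hix, R _ k1, R _ k2, R _ k3, sub_self]
  have hsum : ∑ i : Site (N+1), (bterm (flipAt x σ) i - bterm σ i)
      = ∑ i ∈ S, (bterm (flipAt x σ) i - bterm σ i) :=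
    (Finset.sum_subset (Finset.subset_univ S) hvan).symm
  have hx1 : x ≠ x - ((1,0,0) : Site (N+1)) := (sub_ne_self' he1z).symm
  have hx2 : x ≠ x - ((0,1,0) : Site (N+1)) := (sub_ne_self' he2z).symm
  have hx3 : x ≠ x - ((0,0,1) : Site (N+1)) := (sub_ne_self' he3z).symm
  have hs12 : x - ((1,0,0) : Site (N+1)) ≠ x - (0,1,0) := fun H => h12 (sub_right_inj.mp H)
  have hs13 : x - ((1,0,0) : Site (N+1)) ≠ x - (0,0,1) := fun H => h13 (sub_right_inj.mp H)
  have hs23 : x - ((0,1,0) : Site (N+1)) ≠ x - (0,0,1) := fun H => h23 (sub_right_inj.mp H)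
  have hSsum : ∑ i ∈ S, (bterm (flipAt x σ) i - bterm σ i)
      = (bterm (flipAt x σ) x - bterm σ x)
        + ((bterm (flipAt x σ) (x-(1,0,0)) - bterm σ (x-(1,0,0)))
        + ((bterm (flipAt x σ) (x-(0,1,0)) - bterm σ (x-(0,1,0)))
        + (bterm (flipAt x σ) (x-(0,0,1)) - bterm σ (x-(0,0,1))))) := by
    rw [hSdef]
    rw [Finset.sum_insert (by
          simp only [Finset.mem_insert, Finset.mem_singleton]; push_neg
          exact ⟨hx1, hx2, hx3⟩),
        Finset.sum_insert (by
          simp only [Finset.mem_insert, Finset.mem_singleton]; push_neg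
          exact ⟨hs12, hs13⟩),
        Finset.sum_insert (by
          simp only [Finset.mem_singleton]; exact hs23), Finset.sum_singleton]
  have : bondSum (N+1) (flipAt x σ) - bondSum (N+1) σ = - (2 * (σ x : ℤ) * nbrSum σ x) := by
    rw [hdiff, hsum, hSsum, Dx, D1, D2, D3]
    unfold nbrSum; ring
  linarith

lemma tanh_scalar (t a : ℝ) {s : ℝ} (hs : s = -1 ∨ s = 1) :
    s * Real.exp a + (-s) * Real.exp (a - 2 * s * t)
      = Real.tanh t * (Real.exp a + Real.exp (a - 2 * s * t)) := by
  have hpos : (0:ℝ) < Real.exp t := Real.exp_pos t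
  have hne : Real.exp t ≠ 0 := hpos.ne'
  have hcosh : Real.exp t + Real.exp (-t) ≠ 0 := by positivity
  rcases hs with rfl | rfl
  · have h2 : Real.exp (a - 2 * (-1:ℝ) * t) = Real.exp a * Real.exp t * Real.exp t := by
      rw [← Real.exp_add, ← Real.exp_add]; ring_nf
    rw [h2, Real.tanh_eq_sinh_div_cosh, Real.sinh_eq, Real.cosh_eq, Real.exp_neg]
    field_simp
    ring
  · have h2 : Real.exp (a - 2 * (1:ℝ) * t) = Real.exp a * (Real.exp t)⁻¹ * (Real.exp t)⁻¹ := by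
      rw [← Real.exp_neg, ← Real.exp_add, ← Real.exp_add]; ring_nf
    rw [h2, Real.tanh_eq_sinh_div_cosh, Real.sinh_eq, Real.cosh_eq, Real.exp_neg]
    field_simp
    ring

lemma key_num {N : ℕ} (hn : 3 ≤ N+1) (K : ℝ) (x : Site (N+1)) (P : SpinCfg (N+1) → ℝ)
    (hP : ∀ σ, P (flipAt x σ) = P σ) :
    ∑ σ : SpinCfg (N+1), ((σ x : ℤ):ℝ) * P σ * Real.exp (K * (bondSum (N+1) σ : ℝ))
      = ∑ σ : SpinCfg (N+1),
          Real.tanh (K * (nbrSum σ x : ℝ)) * P σ * Real.exp (K * (bondSum (N+1) σ : ℝ)) := by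
  classical
  set f : SpinCfg (N+1) → ℝ :=
    fun σ => ((σ x : ℤ):ℝ) * P σ * Real.exp (K * (bondSum (N+1) σ : ℝ)) with hf
  set gg : SpinCfg (N+1) → ℝ :=
    fun σ => Real.tanh (K * (nbrSum σ x : ℝ)) * P σ * Real.exp (K * (bondSum (N+1) σ : ℝ)) with hg
  have hflip : ∀ (F : SpinCfg (N+1) → ℝ), ∑ σ, F (flipAt x σ) = ∑ σ, F σ :=
    fun F => Fintype.sum_bijective _ (flipAt_invol x).bijective _ _ (fun σ => rfl)
  have key : ∀ σ : SpinCfg (N+1), f σ + f (flipAt x σ) = gg σ + gg (flipAt x σ) := by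
    intro σ
    have hs' : ((σ x : ℤ):ℝ) = -1 ∨ ((σ x : ℤ):ℝ) = 1 := by
      rcases spin_cases σ x with h | h
      · left; rw [h]; norm_num
      · right; rw [h]; norm_num
    set s : ℝ := ((σ x : ℤ):ℝ) with hsdef
    set t : ℝ := K * ((nbrSum σ x : ℤ):ℝ) with htdef
    set a : ℝ := K * ((bondSum (N+1) σ : ℤ):ℝ) with hadef
    have hexp : K * ((bondSum (N+1) (flipAt x σ) : ℤ):ℝ) = a - 2*s*t := by
      rw [bondSum_flipAt hn x σ]; rw [hadef, htdef, hsdef]; push_cast; ring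
    have hflipx : ((flipAt x σ x : ℤ):ℝ) = -s := by
      rw [flipAt_self]; push_cast; ring
    have htanh : K * ((nbrSum (flipAt x σ) x : ℤ):ℝ) = t := by
      rw [nbrSum_flipAt hn x σ]
    simp only [hf, hg, hP σ, hexp, hflipx, htanh]
    linear_combination P σ * tanh_scalar t a hs'
  have e1 : ∑ σ, f (flipAt x σ) = ∑ σ, f σ := hflip f
  have e2 : ∑ σ, gg (flipAt x σ) = ∑ σ, gg σ := hflip gg
  have h2 : (2:ℝ) * ∑ σ, f σ = 2 * ∑ σ, gg σ := by
    calc (2:ℝ) * ∑ σ, f σ = ∑ σ, f σ + ∑ σ, f (flipAt x σ) := by rw [e1]; ring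
    _ = ∑ σ, (f σ + f (flipAt x σ)) := Finset.sum_add_distrib.symm
    _ = ∑ σ, (gg σ + gg (flipAt x σ)) := Finset.sum_congr rfl (fun σ _ => key σ)
    _ = ∑ σ, gg σ + ∑ σ, gg (flipAt x σ) := Finset.sum_add_distrib
    _ = 2 * ∑ σ, gg σ := by rw [e2]; ring
  linarith


/-- Suzuki's correlation identity: for `n ≥ 3`, real `K`, and `m ≥ 1`
distinct sites `j₁, …, j_m` of the torus,
`⟨∏ᵢ σ(jᵢ)⟩ₙ = (1/m) ∑ₖ ⟨(∏_{i≠k} σ(jᵢ)) tanh(K ∑_{nn of j_k} σ)⟩ₙ`,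
and moreover the identity holds for each fixed `k` without the average. -/
theorem suzuki_identity (n : ℕ) (hn : 3 ≤ n) (K : ℝ) (m : ℕ) (hm : 1 ≤ m)
    (j : Fin m → Site n) (hj : Function.Injective j) :
    (expec n K (fun σ => ∏ i : Fin m, ((σ (j i) : ℤ) : ℝ)) =
      (1 / (m : ℝ)) * ∑ k : Fin m,
        expec n K (fun σ =>
          (∏ i ∈ Finset.univ.erase k, ((σ (j i) : ℤ) : ℝ)) *
            Real.tanh (K * (nbrSum σ (j k) : ℝ)))) ∧
    ∀ k : Fin m,
      expec n K (fun σ => ∏ i : Fin m, ((σ (j i) : ℤ) : ℝ)) =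
        expec n K (fun σ =>
          (∏ i ∈ Finset.univ.erase k, ((σ (j i) : ℤ) : ℝ)) *
            Real.tanh (K * (nbrSum σ (j k) : ℝ))) := by
  obtain ⟨N, rfl⟩ : ∃ N, n = N + 1 := ⟨n - 1, by omega⟩
  have main : ∀ k : Fin m,
      expec (N+1) K (fun σ => ∏ i : Fin m, ((σ (j i) : ℤ) : ℝ)) =
      expec (N+1) K (fun σ =>
        (∏ i ∈ Finset.univ.erase k, ((σ (j i) : ℤ) : ℝ)) *
          Real.tanh (K * (nbrSum σ (j k) : ℝ))) := by
    intro k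
    have hnum := key_num hn K (j k)
        (fun τ : SpinCfg (N+1) => ∏ i ∈ Finset.univ.erase k, ((τ (j i) : ℤ):ℝ))
        (fun σ => Finset.prod_congr rfl fun i hi => by
          rw [flipAt_ne _ _ (fun H => (Finset.mem_erase.mp hi).1 (hj H))])
    simp only [expec]
    congr 1
    calc ∑ σ : SpinCfg (N+1), (∏ i : Fin m, ((σ (j i):ℤ):ℝ))
            * Real.exp (K * (bondSum (N+1) σ : ℝ))
        = ∑ σ : SpinCfg (N+1), ((σ (j k):ℤ):ℝ)
            * (∏ i ∈ Finset.univ.erase k, ((σ (j i):ℤ):ℝ))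
            * Real.exp (K * (bondSum (N+1) σ : ℝ)) := by
          refine Finset.sum_congr rfl fun σ _ => ?_
          rw [← Finset.mul_prod_erase Finset.univ _ (Finset.mem_univ k)]
      _ = ∑ σ : SpinCfg (N+1), Real.tanh (K * (nbrSum σ (j k) : ℝ))
            * (∏ i ∈ Finset.univ.erase k, ((σ (j i):ℤ):ℝ))
            * Real.exp (K * (bondSum (N+1) σ : ℝ)) := hnum
      _ = ∑ σ : SpinCfg (N+1), ((∏ i ∈ Finset.univ.erase k, ((σ (j i):ℤ):ℝ))
            * Real.tanh (K * (nbrSum σ (j k) : ℝ)))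
            * Real.exp (K * (bondSum (N+1) σ : ℝ)) := by
          refine Finset.sum_congr rfl fun σ _ => ?_; ring
  refine ⟨?_, main⟩
  rw [Finset.sum_congr rfl (fun k _ => (main k).symm), Finset.sum_const,
    Finset.card_univ, Fintype.card_fin, nsmul_eq_mul]
  have hm' : (m:ℝ) ≠ 0 := Nat.cast_ne_zero.mpr (by omega)
  field_simp
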